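/- Let $\varepsilon\in(0,1)$, let $p\in[0,1]^{\binom{[n]}{2}}$ be a sub-probability vector, and let $B=\{b\in[n]:\deg_p(b)\ge\varepsilon/(2n)\}$. Then $\sum_{\{a,c\}}\mathsf{HopD}[p](a,c)-\sum_{\{a,c\}}\mathsf{HopD}[p,B](a,c)\le\varepsilon/2$. -/

import Mathlib

open Finset

/-- `deg_p(a) = (1/2) ∑_b p_{ab}` (with `p` a symmetric matrix, zero diagonal). -/
noncomputable def degp (n : ℕ) (p : Fin n → Fin n → ℝ) (a : Fin n) : ℝ :=
  (∑ b, p a b) / 2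

/-- `Walk[p,B]({a,c},b)`; division by zero is zero, matching `0/0 = 0`. -/
noncomputable def walkFn (n : ℕ) (p : Fin n → Fin n → ℝ) (B : Finset (Fin n))
    (a c b : Fin n) : ℝ :=
  if b ∈ B then p a b * p b c / (2 * degp n p b) else 0

/-- `Hop[p,B](a,c) = ∑_{b ∉ {a,c}} Walk[p,B]({a,c},b)`. -/
noncomputable def hopFn (n : ℕ) (p : Fin n → Fin n → ℝ) (B : Finset (Fin n))
    (a c : Fin n) : ℝ :=
  ∑ b ∈ Finset.univ.filter (fun b => b ≠ a ∧ b ≠ c), walkFn n p B a c b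

/-- `max_{b ∉ {a,c}} Walk[p,B]({a,c},b)` (as the supremum of the finite set of
values; the supremum of the empty set of reals is `0`). -/
noncomputable def maxWalkFn (n : ℕ) (p : Fin n → Fin n → ℝ) (B : Finset (Fin n))
    (a c : Fin n) : ℝ :=
  sSup ((fun b => walkFn n p B a c b) '' {b : Fin n | b ≠ a ∧ b ≠ c})

/-- `HopD[p,B](a,c) = Hop[p,B](a,c) - max_{b ∉ {a,c}} Walk[p,B]({a,c},b)`. -/
noncomputable def hopDFn (n : ℕ) (p : Fin n → Fin n → ℝ) (B : Finset (Fin n))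
    (a c : Fin n) : ℝ :=
  hopFn n p B a c - maxWalkFn n p B a c

variable {n : ℕ} {p : Fin n → Fin n → ℝ}

lemma degp_nonneg (hnn : ∀ a b, 0 ≤ p a b) (a : Fin n) : 0 ≤ degp n p a :=
  div_nonneg (Finset.sum_nonneg fun b _ => hnn a b) (by norm_num)

lemma walk_nonneg (hnn : ∀ a b, 0 ≤ p a b) (B : Finset (Fin n)) (a c b : Fin n) :
    0 ≤ walkFn n p B a c b := by
  unfold walkFn
  split
  · exact div_nonneg (mul_nonneg (hnn _ _) (hnn _ _))
      (by have := degp_nonneg hnn b; linarith)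
  · exact le_refl 0

lemma walk_mono (hnn : ∀ a b, 0 ≤ p a b) (B : Finset (Fin n)) (a c b : Fin n) :
    walkFn n p B a c b ≤ walkFn n p Finset.univ a c b := by
  unfold walkFn
  split
  · simp
  · simp only [Finset.mem_univ, if_true]
    exact div_nonneg (mul_nonneg (hnn _ _) (hnn _ _))
      (by have := degp_nonneg hnn b; linarith)

lemma maxWalk_mono (hnn : ∀ a b, 0 ≤ p a b) (B : Finset (Fin n)) (a c : Fin n) :
    maxWalkFn n p B a c ≤ maxWalkFn n p Finset.univ a c := by
  unfold maxWalkFn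
  rcases Set.eq_empty_or_nonempty {b : Fin n | b ≠ a ∧ b ≠ c} with h | h
  · rw [h]; simp
  · apply csSup_le (h.image _)
    rintro x ⟨b, hb, rfl⟩
    calc walkFn n p B a c b ≤ walkFn n p Finset.univ a c b := walk_mono hnn B a c b
      _ ≤ _ := le_csSup ((Set.toFinite _).image _).bddAbove ⟨b, hb, rfl⟩

theorem stmt11 (n : ℕ) (ε : ℝ) (hε0 : 0 < ε) (hε1 : ε < 1)
    (p : Fin n → Fin n → ℝ)
    (hsymm : ∀ a b, p a b = p b a) (hdiag : ∀ a, p a a = 0)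
    (hnn : ∀ a b, 0 ≤ p a b) (hle : ∀ a b, p a b ≤ 1)
    (hsub : (∑ a, ∑ b, p a b) / 2 ≤ 1)
    (B : Finset (Fin n))
    (hB : B = Finset.univ.filter (fun b => ε / (2 * n) ≤ degp n p b)) :
    (∑ a, ∑ c ∈ Finset.univ.filter (· ≠ a), hopDFn n p Finset.univ a c) / 2
      - (∑ a, ∑ c ∈ Finset.univ.filter (· ≠ a), hopDFn n p B a c) / 2
      ≤ ε / 2 := by
  rcases Nat.eq_zero_or_pos n with hn | hn
  · subst hn
    simp
    positivity
  have hnR : (0:ℝ) < n := by exact_mod_cast hn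
  set g : Fin n → Fin n → Fin n → ℝ :=
    fun a c b => if b ∈ B then 0 else walkFn n p Finset.univ a c b with hg
  have hgnn : ∀ a c b, 0 ≤ g a c b := fun a c b => by
    simp only [hg]
    split
    · exact le_rfl
    · exact walk_nonneg hnn _ a c b
  have step1 : ∀ a c, hopDFn n p Finset.univ a c - hopDFn n p B a c
      ≤ ∑ b, g a c b := by
    intro a c
    have h1 : hopDFn n p Finset.univ a c - hopDFn n p B a c
        ≤ hopFn n p Finset.univ a c - hopFn n p B a c := by
      unfold hopDFn
      have := maxWalk_mono hnn B a c
      linarith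
    have h2 : hopFn n p Finset.univ a c - hopFn n p B a c
        = ∑ b ∈ Finset.univ.filter (fun b => b ≠ a ∧ b ≠ c), g a c b := by
      unfold hopFn
      rw [← Finset.sum_sub_distrib]
      refine Finset.sum_congr rfl fun b _ => ?_
      simp only [hg, walkFn, Finset.mem_univ, if_true]
      split_ifs <;> ring
    have h3 : ∑ b ∈ Finset.univ.filter (fun b => b ≠ a ∧ b ≠ c), g a c b
        ≤ ∑ b, g a c b :=
      Finset.sum_le_sum_of_subset_of_nonneg (Finset.filter_subset _ _)
        (fun b _ _ => hgnn a c b)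
    linarith
  have hw : ∀ b : Fin n, ∑ a, ∑ c, walkFn n p Finset.univ a c b
      = 2 * degp n p b := by
    intro b
    have hS : ∑ c, p b c = 2 * degp n p b := by unfold degp; ring
    by_cases hD : degp n p b = 0
    · simp [walkFn, hD]
    · have hstep : ∀ a, ∑ c, walkFn n p Finset.univ a c b = p a b := by
        intro a
        simp only [walkFn, Finset.mem_univ, if_true]
        rw [← Finset.sum_div, ← Finset.mul_sum, hS]
        field_simp
      simp only [hstep]
      have h4 : ∑ a, p a b = ∑ a, p b a := Finset.sum_congr rfl fun a _ => hsymm a b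
      rw [h4, hS]
  suffices h : (∑ a, ∑ c ∈ Finset.univ.filter (· ≠ a), hopDFn n p Finset.univ a c)
      - (∑ a, ∑ c ∈ Finset.univ.filter (· ≠ a), hopDFn n p B a c) ≤ ε by linarith
  have hdiff : (∑ a, ∑ c ∈ Finset.univ.filter (· ≠ a), hopDFn n p Finset.univ a c)
      - (∑ a, ∑ c ∈ Finset.univ.filter (· ≠ a), hopDFn n p B a c)
      = ∑ a, ∑ c ∈ Finset.univ.filter (· ≠ a),
          (hopDFn n p Finset.univ a c - hopDFn n p B a c) := by
    rw [← Finset.sum_sub_distrib]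
    exact Finset.sum_congr rfl fun a _ => (Finset.sum_sub_distrib _ _).symm
  rw [hdiff]
  calc ∑ a, ∑ c ∈ Finset.univ.filter (· ≠ a),
          (hopDFn n p Finset.univ a c - hopDFn n p B a c)
      ≤ ∑ a, ∑ c ∈ Finset.univ.filter (· ≠ a), ∑ b, g a c b :=
        Finset.sum_le_sum fun a _ => Finset.sum_le_sum fun c _ => step1 a c
    _ ≤ ∑ a, ∑ c, ∑ b, g a c b :=
        Finset.sum_le_sum fun a _ =>
          Finset.sum_le_sum_of_subset_of_nonneg (Finset.filter_subset _ _)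
            (fun c _ _ => Finset.sum_nonneg fun b _ => hgnn a c b)
    _ = ∑ a, ∑ b, ∑ c, g a c b := Finset.sum_congr rfl fun a _ => Finset.sum_comm
    _ = ∑ b, ∑ a, ∑ c, g a c b := Finset.sum_comm
    _ = ∑ b, (if b ∈ B then 0 else 2 * degp n p b) := by
        refine Finset.sum_congr rfl fun b _ => ?_
        simp only [hg]
        split_ifs with hb
        · simp
        · exact hw b
    _ ≤ ∑ _b : Fin n, (ε / n) := by
        refine Finset.sum_le_sum fun b _ => ?_
        split_ifs with hb
        · positivity
        · rw [hB] at hb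
          simp only [Finset.mem_filter, Finset.mem_univ, true_and, not_le] at hb
          have h5 : ε / (2 * n) = ε / n / 2 := by ring
          rw [h5] at hb
          linarith
    _ = n * (ε / n) := by
        rw [Finset.sum_const, Finset.card_univ, Fintype.card_fin, nsmul_eq_mul]
    _ = ε := by field_simp
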